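/- Let E be a real inner product space and let x : [0,1] → E be a continuously differentiable path with x(τ) ≠ 0 for all τ ∈ [0,1]. Suppose that for every τ ∈ [0,1] the vectors x(τ) and x′(τ) are linearly dependent (equivalently, x′(τ) ∈ span{x(τ)}). Then x(1) = a · x(0) for some real number a > 0; that is, the whole path lies on a single open ray from the origin. -/

import Mathlib

open Set MeasureTheory intervalIntegral

/-- If `x : [0,1] → E` is a nonvanishing C¹ path in a real inner product space
whose velocity `x'(τ)` always lies in the span of `x(τ)`, then the endpoint
`x(1)` is a positive multiple of `x(0)`: the path lies on a single open ray. -/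
theorem endpoint_pos_multiple_of_radial_velocity
    {E : Type*} [NormedAddCommGroup E] [InnerProductSpace ℝ E]
    (x x' : ℝ → E)
    (hx : ∀ τ ∈ Icc (0 : ℝ) 1, HasDerivAt x (x' τ) τ)
    (hx' : ContinuousOn x' (Icc 0 1))
    (hne : ∀ τ ∈ Icc (0 : ℝ) 1, x τ ≠ 0)
    (hspan : ∀ τ ∈ Icc (0 : ℝ) 1, x' τ ∈ Submodule.span ℝ {x τ}) :
    ∃ a : ℝ, 0 < a ∧ x 1 = a • x 0 := by
  set c : ℝ → ℝ := fun τ => (inner ℝ (x' τ) (x τ) : ℝ) / ‖x τ‖ ^ 2 with hcdef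
  have hxc : ContinuousOn x (Icc 0 1) := fun τ hτ =>
    ((hx τ hτ).continuousAt).continuousWithinAt
  have hprop : ∀ τ ∈ Icc (0 : ℝ) 1, x' τ = c τ • x τ := by
    intro τ hτ
    obtain ⟨k, hk⟩ := Submodule.mem_span_singleton.mp (hspan τ hτ)
    have hnorm : (‖x τ‖ : ℝ) ^ 2 ≠ 0 :=
      pow_ne_zero 2 (norm_ne_zero_iff.mpr (hne τ hτ))
    have hck : c τ = k := by
      have : (inner ℝ (x' τ) (x τ) : ℝ) = k * ‖x τ‖ ^ 2 := by
        rw [← hk, real_inner_smul_left, real_inner_self_eq_norm_sq]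
      rw [hcdef]
      simp only
      rw [this]
      field_simp [norm_ne_zero_iff.mpr (hne τ hτ)]
    rw [hck, hk]
  have hcc : ContinuousOn c (Icc 0 1) := by
    apply ContinuousOn.div (hx'.inner hxc) ((hxc.norm).pow 2)
    intro τ hτ
    exact pow_ne_zero 2 (norm_ne_zero_iff.mpr (hne τ hτ))
  set F : ℝ → ℝ := fun τ => ∫ s in (0 : ℝ)..τ, c s with hFdef
  have hint : IntegrableOn c (Icc 0 1) := hcc.integrableOn_Icc
  have hFcont : ContinuousOn F (Icc 0 1) := by
    have := intervalIntegral.continuousOn_primitive_interval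
      (a := (0:ℝ)) (b := 1) (f := c) (by rwa [uIcc_of_le zero_le_one])
    rwa [uIcc_of_le zero_le_one] at this
  -- derivative of F within Ici τ for τ ∈ Ico 0 1
  have hFderiv : ∀ τ ∈ Ico (0 : ℝ) 1, HasDerivWithinAt F (c τ) (Ici τ) τ := by
    intro τ hτ
    have hτ' : τ ∈ Icc (0 : ℝ) 1 := Ico_subset_Icc_self hτ
    have hmem : Icc (0 : ℝ) 1 ∈ nhdsWithin τ (Ici τ) := Icc_mem_nhdsGE_of_mem hτ
    have hii : IntervalIntegrable c volume 0 τ := by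
      apply ContinuousOn.intervalIntegrable
      rw [uIcc_of_le hτ'.1]
      exact hcc.mono (Icc_subset_Icc le_rfl hτ'.2)
    refine intervalIntegral.integral_hasDerivWithinAt_right hii ?_ ?_
    · exact ⟨Icc 0 1, Icc_mem_nhdsGT_of_mem hτ, (hcc.aestronglyMeasurable measurableSet_Icc)⟩
    · exact ((hcc τ hτ').mono_of_mem_nhdsWithin (Icc_mem_nhdsGT_of_mem hτ))
  set y : ℝ → E := fun τ => Real.exp (-F τ) • x τ with hydef
  have hycont : ContinuousOn y (Icc 0 1) :=
    ((hFcont.neg).rexp).smul hxc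
  have hyderiv : ∀ τ ∈ Ico (0 : ℝ) 1, HasDerivWithinAt y 0 (Ici τ) τ := by
    intro τ hτ
    have hτ' : τ ∈ Icc (0 : ℝ) 1 := Ico_subset_Icc_self hτ
    have h1 : HasDerivWithinAt (fun t => Real.exp (-F t))
        (Real.exp (-F τ) * (-c τ)) (Ici τ) τ := ((hFderiv τ hτ).neg).exp
    have h2 : HasDerivWithinAt x (x' τ) (Ici τ) τ := (hx τ hτ').hasDerivWithinAt
    have h3 := h1.smul h2
    convert h3 using 1
    · rfl
    rw [hprop τ hτ']
    module
  have hconst := constant_of_has_deriv_right_zero hycont hyderiv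
  have hy1 : y 1 = y 0 := hconst 1 (by norm_num)
  have hF0 : F 0 = 0 := intervalIntegral.integral_same
  have hy0 : y 0 = x 0 := by simp [hydef, hF0]
  refine ⟨Real.exp (F 1), Real.exp_pos _, ?_⟩
  have : Real.exp (-F 1) • x 1 = x 0 := by rw [← hy0]; exact hy1
  calc x 1 = Real.exp (F 1) • (Real.exp (-F 1) • x 1) := by
        rw [smul_smul, ← Real.exp_add, add_neg_cancel, Real.exp_zero, one_smul]
    _ = Real.exp (F 1) • x 0 := by rw [this]
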